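/- arXiv:1908.02915 — 5 statements merged into one kernel-verified Lean document; each statement's English description precedes it below -/
import Mathlib

section
/- Let z be a finite-dimensional abelian complex Lie algebra, let g₁, …, gₙ be finite-dimensional simple complex Lie algebras, and let g = z ⊕ g₁ ⊕ ⋯ ⊕ gₙ (direct sum of Lie algebras). Fix Cartan subalgebras hᵢ ⊆ gᵢ, so that h = z ⊕ h₁ ⊕ ⋯ ⊕ hₙ is a Cartan subalgebra of g. Then every Lie subalgebra s ⊆ g containing h is of the form s = z ⊕ s₁ ⊕ ⋯ ⊕ sₙ, where each sᵢ is a Lie subalgebra of gᵢ containing hᵢ. -/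
open DirectSum

/-- **Lemma 4.3** (Cartan-containing form): if `g = z ⊕ g₁ ⊕ ⋯ ⊕ gₙ` with `z` abelian and
each `gᵢ` simple (an internal direct sum of ideals of `L`), and `hᵢ ⊆ gᵢ` are Cartan
subalgebras, then every subalgebra `s` containing `z` and every `hᵢ` decomposes as
`s = z ⊕ s₁ ⊕ ⋯ ⊕ sₙ` with `sᵢ ⊆ gᵢ` a subalgebra containing `hᵢ`. -/
theorem subalgebra_containing_cartan_decomposes
    (L : Type) [LieRing L] [LieAlgebra ℂ L] [FiniteDimensional ℂ L]
    (ι : Type) [Fintype ι] [DecidableEq ι]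
    (z : LieIdeal ℂ L) (hz : IsLieAbelian z)
    (g : ι → LieIdeal ℂ L) (hg : ∀ i, LieAlgebra.IsSimple ℂ (g i))
    (hdirect : DirectSum.IsInternal
      (fun o : Option ι => o.elim (z : Submodule ℂ L) (fun i => ((g i : Submodule ℂ L)))))
    (h : ι → LieSubalgebra ℂ L)
    (hcartan : ∀ i, ∃ H' : LieSubalgebra ℂ (g i), H'.IsCartanSubalgebra ∧
        LieSubalgebra.map (g i).incl H' = h i) :
    ∀ s : LieSubalgebra ℂ L,
      (z : Submodule ℂ L) ≤ s.toSubmodule → (∀ i, h i ≤ s) →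
      ∃ s' : ι → LieSubalgebra ℂ L,
        (∀ i, (s' i).toSubmodule ≤ (g i : Submodule ℂ L)) ∧
        (∀ i, h i ≤ s' i) ∧
        s.toSubmodule = (z : Submodule ℂ L) ⊔ ⨆ i, (s' i).toSubmodule := by
  classical
  intro s hzs hhs
  set F : Option ι → Submodule ℂ L :=
    (fun o : Option ι => o.elim (z : Submodule ℂ L) (fun i => ((g i : Submodule ℂ L)))) with hF
  have hFideal : ∀ o : Option ι, ∀ a : L, ∀ {b : L}, b ∈ F o → ⁅a, b⁆ ∈ F o := by
    rintro (_|j) a b hb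
    · exact z.lie_mem hb
    · exact (g j).lie_mem hb
  have hdisj : ∀ {o o' : Option ι}, o ≠ o' → ∀ {x : L}, x ∈ F o → x ∈ F o' → x = 0 := by
    intro o o' hne x hx hx'
    have hind := hdirect.submodule_iSupIndep
    have h0 : x ∈ F o ⊓ F o' := ⟨hx, hx'⟩
    rwa [(hind.pairwiseDisjoint hne).eq_bot, Submodule.mem_bot] at h0
  have hbrak : ∀ {o o' : Option ι}, o ≠ o' → ∀ {a b : L}, a ∈ F o → b ∈ F o' → ⁅a, b⁆ = 0 := by
    intro o o' hne a b ha hb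
    refine hdisj hne ?_ (hFideal o' a hb)
    rw [← lie_skew]; exact neg_mem (hFideal o b ha)
  -- the projections
  let e : (⨁ o, F o) ≃ₗ[ℂ] L := LinearEquiv.ofBijective (DirectSum.coeLinearMap F) hdirect
  let π : Option ι → L →ₗ[ℂ] L :=
    fun o => (F o).subtype ∘ₗ (DirectSum.component ℂ (Option ι) (fun o => F o) o) ∘ₗ
      (e.symm : L →ₗ[ℂ] (⨁ o, F o))
  have hπmem : ∀ o x, π o x ∈ F o := fun o x => ((e.symm x) o).2
  have hπsum : ∀ x : L, ∑ o, π o x = x := by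
    intro x
    have : (DirectSum.coeLinearMap F) (e.symm x) = x := e.apply_symm_apply x
    conv_rhs => rw [← this, ← DirectSum.sum_univ_of (e.symm x)]
    rw [map_sum]
    simp only [π, LinearMap.comp_apply, DirectSum.coeLinearMap_of]
    rfl
  have hπof : ∀ o o' : Option ι, ∀ y : L, (hy : y ∈ F o) →
      π o' y = if o' = o then y else 0 := by
    intro o o' y hy
    have hsymm : e.symm y = DirectSum.of (fun o => F o) o ⟨y, hy⟩ := by
      rw [LinearEquiv.symm_apply_eq]
      exact (DirectSum.coeLinearMap_of F o ⟨y, hy⟩).symm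
    simp only [π, LinearMap.comp_apply]
    rw [show (e.symm : L →ₗ[ℂ] (⨁ o, F o)) y = e.symm y from rfl, hsymm]
    by_cases hoo : o' = o
    · subst hoo
      rw [if_pos rfl, ← DirectSum.apply_eq_component, DirectSum.of_eq_same]
      rfl
    · rw [if_neg hoo, ← DirectSum.apply_eq_component,
        DirectSum.of_eq_of_ne _ _ _ hoo]
      rfl
  have hgsub : ∀ i, ∀ x ∈ h i, x ∈ F (some i) := by
    intro i x hx
    obtain ⟨H', hH', hmap⟩ := hcartan i
    rw [← hmap, LieSubalgebra.mem_map] at hx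
    obtain ⟨y, -, rfl⟩ := hx
    exact ((y : ↥(g i))).2
  -- key fact: components of elements of s lie in s
  have key : ∀ i : ι, ∀ x ∈ s.toSubmodule, π (some i) x ∈ s.toSubmodule := by
    intro i x hx
    obtain ⟨H', hH', hmap⟩ := hcartan i
    haveI : H'.IsCartanSubalgebra := hH'
    -- `h i` is a nilpotent Lie algebra
    haveI hnilp : LieRing.IsNilpotent ↥(h i) := by
      let f : ↥H' →ₗ⁅ℂ⁆ L := ((g i).incl).comp H'.incl
      have hrange : f.range = h i := by
        rw [← hmap]
        ext w
        simp only [LieHom.mem_range, LieSubalgebra.mem_map]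
        constructor
        · rintro ⟨y, rfl⟩; exact ⟨y.1, y.2, rfl⟩
        · rintro ⟨y, hy, rfl⟩; exact ⟨⟨y, hy⟩, rfl⟩
      have := f.isNilpotent_range
      rwa [hrange] at this
    -- the zero weight space of `h i` acting on `L`
    set W : LieSubmodule ℂ ↥(h i) L := LieModule.genWeightSpace L (0 : ↥(h i) → ℂ) with hW
    -- elements of the other summands are killed by `h i`, hence lie in `W`
    have hzero : ∀ o : Option ι, o ≠ some i → F o ≤ W.toSubmodule := by
      intro o ho y hy
      have hmem : y ∈ LieModule.genWeightSpace L (0 : ↥(h i) → ℂ) := by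
        rw [LieModule.mem_genWeightSpace]
        intro Y
        refine ⟨1, ?_⟩
        have hb : ⁅(Y : L), y⁆ = 0 := hbrak (Ne.symm ho) (hgsub i (Y : L) Y.2) hy
        simpa using hb
      exact hmem
    -- the zero weight space meets `g i` inside `h i`
    have hzrs : ∀ u : L, u ∈ W.toSubmodule → u ∈ F (some i) → u ∈ h i := by
      intro u huW hug
      have hu' : (⟨u, hug⟩ : ↥(g i)) ∈ LieAlgebra.zeroRootSubalgebra ℂ ↥(g i) H' := by
        rw [LieAlgebra.mem_zeroRootSubalgebra]
        intro y
        set Y : L := ((y : ↥(g i)) : L) with hYdef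
        have hY : Y ∈ h i := by
          rw [← hmap]
          exact ⟨y.1, y.2, rfl⟩
        have hbridge : ∀ (k : ℕ) (m : ↥(g i)),
            ((((LieModule.toEnd ℂ ↥H' ↥(g i) y) ^ k) m : ↥(g i)) : L) =
              ((LieModule.toEnd ℂ ↥(h i) L ⟨Y, hY⟩) ^ k) (m : L) := by
          intro k
          induction k with
          | zero => intro m; simp
          | succ k ih =>
            intro m
            rw [pow_succ', pow_succ', Module.End.mul_apply, Module.End.mul_apply, ← ih]
            rfl
        have huW' : u ∈ LieModule.genWeightSpace L (0 : ↥(h i) → ℂ) := huW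
        rw [LieModule.mem_genWeightSpace] at huW'
        obtain ⟨k, hk⟩ := huW' ⟨Y, hY⟩
        refine ⟨k, ?_⟩
        apply Subtype.ext
        rw [ZeroMemClass.coe_zero, hbridge k ⟨u, hug⟩]
        simpa using hk
      rw [LieAlgebra.zeroRootSubalgebra_eq_of_is_cartan ℂ ↥(g i) H'] at hu'
      rw [← hmap]
      exact ⟨⟨u, hug⟩, hu', rfl⟩
    -- `s` decomposes into weight spaces: `s ≤ (s ⊓ W) ⊔ (s ⊓ g i)`
    have hdec : s.toSubmodule ≤ (s.toSubmodule ⊓ W.toSubmodule) ⊔ (s.toSubmodule ⊓ F (some i)) := by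
      -- `s` as a Lie submodule for the action of `h i`
      let N : LieSubmodule ℂ ↥(h i) L :=
        { s.toSubmodule with
          lie_mem := fun {Y} {m} hm => s.lie_mem (hhs i Y.2) hm }
      have htop : ⨆ χ : ↥(h i) → ℂ, LieModule.genWeightSpace (↥N) χ = ⊤ :=
        LieModule.iSup_genWeightSpace_eq_top ℂ ↥(h i) ↥N
      have hNmap : N = ⨆ χ : ↥(h i) → ℂ, (LieModule.genWeightSpace (↥N) χ).map N.incl := by
        rw [← LieSubmodule.map_iSup, htop, LieSubmodule.map_incl_top]
      have hle : ∀ χ : ↥(h i) → ℂ,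
          ((LieModule.genWeightSpace (↥N) χ).map N.incl).toSubmodule ≤
            (s.toSubmodule ⊓ W.toSubmodule) ⊔ (s.toSubmodule ⊓ F (some i)) := by
        intro χ
        have hsle : ((LieModule.genWeightSpace (↥N) χ).map N.incl).toSubmodule ≤ s.toSubmodule := by
          have : (LieModule.genWeightSpace (↥N) χ).map N.incl ≤ N := LieSubmodule.map_incl_le
          exact this
        have hwle : ((LieModule.genWeightSpace (↥N) χ).map N.incl).toSubmodule ≤
            (LieModule.genWeightSpace L χ : LieSubmodule ℂ ↥(h i) L).toSubmodule :=
          LieModule.map_genWeightSpace_le N.incl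
        by_cases hχ : χ = 0
        · subst hχ
          exact le_sup_of_le_left (le_inf hsle hwle)
        · refine le_sup_of_le_right (le_inf hsle ?_)
          -- nonzero weight spaces live inside `g i`
          obtain ⟨Y, hY⟩ : ∃ Y : ↥(h i), χ Y ≠ 0 := by
            by_contra hc
            push_neg at hc
            exact hχ (funext fun Y => hc Y)
          refine hwle.trans ?_
          intro y hy
          have hy' : y ∈ LieModule.genWeightSpace L χ := hy
          rw [LieModule.mem_genWeightSpace] at hy'
          obtain ⟨k, hk⟩ := hy' Y
          -- the operator `⁅Y, ·⁆ - χ Y` scales components outside `g i` by `-χ Y`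
          set T : Module.End ℂ L := LieModule.toEnd ℂ ↥(h i) L Y - χ Y • 1 with hT
          have hπT : ∀ o : Option ι, o ≠ some i → ∀ w : L, π o (T w) = (-(χ Y)) • π o w := by
            intro o ho w
            have hbY : ⁅(Y : L), w⁆ ∈ F (some i) := by
              rw [← lie_skew]
              exact neg_mem ((g i).lie_mem (hgsub i (Y : L) Y.2))
            have h0 : π o ⁅(Y : L), w⁆ = 0 := by
              rw [hπof (some i) o _ hbY, if_neg ho]
            have : T w = ⁅(Y : L), w⁆ - χ Y • w := rfl
            rw [this, map_sub, map_smul, h0, zero_sub, neg_smul]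
          have hπTk : ∀ o : Option ι, o ≠ some i → ∀ (k : ℕ) (w : L),
              π o ((T ^ k) w) = ((-(χ Y)) ^ k) • π o w := by
            intro o ho k
            induction k with
            | zero => intro w; simp
            | succ k ih =>
              intro w
              rw [pow_succ', pow_succ', Module.End.mul_apply,
                hπT o ho _, ih w, smul_smul]
          have hπ0 : ∀ o : Option ι, o ≠ some i → π o y = 0 := by
            intro o ho
            have := hπTk o ho k y
            rw [hk, map_zero] at this
            have hne : ((-(χ Y)) ^ k) ≠ 0 := pow_ne_zero _ (neg_ne_zero.mpr hY)
            exact (smul_eq_zero.mp this.symm).elim (fun hc => absurd hc hne) id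
          have hsum := hπsum y
          rw [Fintype.sum_option, ← Finset.add_sum_erase _ _ (Finset.mem_univ i)] at hsum
          rw [hπ0 none (by simp)] at hsum
          rw [Finset.sum_eq_zero (fun j hj => hπ0 (some j)
            (by simpa using (Finset.ne_of_mem_erase hj)))] at hsum
          rw [zero_add, add_zero] at hsum
          rw [← hsum]
          exact hπmem (some i) y
      calc s.toSubmodule = N.toSubmodule := rfl
        _ = ⨆ χ : ↥(h i) → ℂ, ((LieModule.genWeightSpace (↥N) χ).map N.incl).toSubmodule := by
            rw [← LieSubmodule.iSup_toSubmodule, ← hNmap]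
        _ ≤ _ := iSup_le hle
    -- now conclude
    obtain ⟨u, hu, v, hv, huv⟩ := Submodule.mem_sup.mp (hdec hx)
    have hvi : π (some i) v = v := by
      rw [hπof (some i) (some i) v hv.2, if_pos rfl]
    have hπu : π (some i) u ∈ h i := by
      apply hzrs _ ?_ (hπmem (some i) u)
      have hrest : u - π (some i) u ∈ W.toSubmodule := by
        have h1 := hπsum u
        rw [Fintype.sum_option, ← Finset.add_sum_erase _ _ (Finset.mem_univ i)] at h1
        set a := π none u with ha
        set b := π (some i) u with hb
        set c := ∑ j ∈ Finset.univ.erase i, π (some j) u with hc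
        have h2 : u - b = a + c := by rw [← h1]; abel
        rw [h2]
        refine Submodule.add_mem _ (hzero none (by simp) (hπmem none u)) ?_
        refine Submodule.sum_mem _ (fun j hj => ?_)
        exact hzero (some j) (by simpa using (Finset.ne_of_mem_erase hj)) (hπmem (some j) u)
      have := W.toSubmodule.sub_mem hu.2 hrest
      simpa using this
    have : π (some i) x = π (some i) u + v := by
      rw [← huv, map_add, hvi]
    rw [this]
    exact Submodule.add_mem _ (hhs i hπu) hv.1
  refine ⟨fun i => s ⊓ (LieIdeal.toLieSubalgebra ℂ L (g i)), ?_, ?_, ?_⟩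
  · intro i
    intro y hy
    exact hy.2
  · intro i
    exact le_inf (hhs i) (fun x hx => hgsub i x hx)
  · apply le_antisymm
    · intro x hx
      have hsum := hπsum x
      have hzmem : π none x ∈ (z : Submodule ℂ L) ⊔ ⨆ i, (s ⊓ (LieIdeal.toLieSubalgebra ℂ L (g i))).toSubmodule :=
        Submodule.mem_sup_left (hπmem none x)
      have himem : ∀ i : ι, π (some i) x ∈ (z : Submodule ℂ L) ⊔ ⨆ i, (s ⊓ (LieIdeal.toLieSubalgebra ℂ L (g i))).toSubmodule := by
        intro i
        refine Submodule.mem_sup_right (Submodule.mem_iSup_of_mem i ?_)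
        exact ⟨key i x hx, hπmem (some i) x⟩
      have hmem : ∑ o, π o x ∈ (z : Submodule ℂ L) ⊔ ⨆ i, (s ⊓ (LieIdeal.toLieSubalgebra ℂ L (g i))).toSubmodule := by
        rw [Fintype.sum_option]
        exact Submodule.add_mem _ hzmem (Submodule.sum_mem _ (fun i _ => himem i))
      rwa [hsum] at hmem
    · refine sup_le hzs (iSup_le fun i => ?_)
      intro y hy
      exact hy.1
end

section
/- Let 0 → A → B → C → 0 be a short exact sequence of finitely generated abelian groups (i.e., the map A → B is injective, the map B → C is surjective, and the image of A → B equals the kernel of B → C). If B is isomorphic as an abelian group to the direct product A × C, then the sequence splits: the surjection B → C admits a group-homomorphism section C → B (equivalently, the injection A → B admits a retraction). -/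
section Aux

/-- The torsion subgroup of a finitely generated abelian group is finite. -/
lemma miyata_torsion_finite (G : Type) [AddCommGroup G] [AddGroup.FG G] :
    Finite (AddCommGroup.torsion G) := by
  have h1 : Module.Finite ℤ G := Module.Finite.iff_addGroup_fg.mpr ‹_›
  have h2 : IsNoetherian ℤ G := inferInstance
  set S : Submodule ℤ G := AddSubgroup.toIntSubmodule (AddCommGroup.torsion G) with hS
  have h3 : S.FG := IsNoetherian.noetherian S
  have h4 : Module.Finite ℤ S := Module.Finite.iff_fg.mpr h3
  have h5 : AddGroup.FG S := Module.Finite.iff_addGroup_fg.mp h4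
  have h6 : AddGroup.FG (AddCommGroup.torsion G) := h5
  have h7 : AddMonoid.IsTorsion (AddCommGroup.torsion G) := by
    intro x
    obtain ⟨n, hn, hx⟩ := (isOfFinAddOrder_iff_nsmul_eq_zero).mp x.2
    exact isOfFinAddOrder_iff_nsmul_eq_zero.mpr ⟨n, hn, Subtype.ext (by simpa using hx)⟩
  exact AddCommGroup.finite_of_fg_torsion _ h7

/-- Homs from a finite abelian group into a finitely generated abelian group form
a finite group. -/
lemma miyata_finite_hom (T G : Type) [AddCommGroup T] [AddCommGroup G]
    [Finite T] [AddGroup.FG G] : Finite (T →+ G) := by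
  have : Finite (AddCommGroup.torsion G) := miyata_torsion_finite G
  have key : ∀ (h : T →+ G) (t : T), h t ∈ AddCommGroup.torsion G := by
    intro h t
    exact h.isOfFinAddOrder (isOfFinAddOrder_of_finite t)
  have : Function.Injective
      (fun (h : T →+ G) => (fun t : T => (⟨h t, key h t⟩ : AddCommGroup.torsion G))) := by
    intro h h' hh
    ext t
    have := congrFun hh t
    simpa using congrArg Subtype.val this
  exact Finite.of_injective _ this

end Aux

/-- **Miyata's splitting theorem**: a short exact sequence `0 → A → B → C → 0` of finitely
generated abelian groups with `B ≅ A × C` splits. -/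
theorem ses_splits_of_middle_iso_prod (A B C : Type)
    [AddCommGroup A] [AddCommGroup B] [AddCommGroup C]
    [AddGroup.FG A] [AddGroup.FG B] [AddGroup.FG C]
    (f : A →+ B) (g : B →+ C)
    (hf : Function.Injective f) (hg : Function.Surjective g)
    (hex : f.range = g.ker)
    (hiso : Nonempty (B ≃+ A × C)) :
    ∃ s : C →+ B, g.comp s = AddMonoidHom.id C := by
  obtain ⟨e⟩ := hiso
  set T : AddSubgroup C := AddCommGroup.torsion C with hTdef
  have hfinT : Finite T := miyata_torsion_finite C
  have finHA : Finite (T →+ A) := miyata_finite_hom T A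
  have finHB : Finite (T →+ B) := miyata_finite_hom T B
  have finHC : Finite (T →+ C) := miyata_finite_hom T C
  -- the "compose with g" homomorphism on hom groups
  let φ : (T →+ B) →+ (T →+ C) :=
    { toFun := fun s => g.comp s
      map_zero' := by ext t; simp
      map_add' := by intro s s'; ext t; simp }
  have hgf : ∀ a : A, g (f a) = 0 := by
    intro a
    have : f a ∈ g.ker := hex ▸ AddMonoidHom.mem_range.mpr ⟨a, rfl⟩
    exact this
  -- kernel of φ is in bijection with T →+ A
  have hkercard : Nat.card φ.ker = Nat.card (T →+ A) := by
    have hbij : Function.Bijective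
        (fun (s : T →+ A) => (⟨f.comp s, by ext t; simp [φ, hgf]⟩ : φ.ker)) := by
      constructor
      · intro s s' h
        ext t
        apply hf
        have := congrArg (fun (x : φ.ker) => (x : T →+ B) t) h
        simpa using this
      · rintro ⟨s, hs⟩
        have hmem : ∀ t : T, s t ∈ f.range := by
          intro t
          rw [hex]
          have : g.comp s = 0 := hs
          have := congrArg (fun (u : T →+ C) => u t) this
          simpa using this
        refine ⟨((AddMonoidHom.ofInjective hf).symm.toAddMonoidHom).comp
          (s.codRestrict f.range hmem), ?_⟩
        apply Subtype.ext
        ext t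
        show f ((AddMonoidHom.ofInjective hf).symm ⟨s t, hmem t⟩) = s t
        have := (AddMonoidHom.ofInjective hf).apply_symm_apply ⟨s t, hmem t⟩
        exact congrArg Subtype.val this
    exact (Nat.card_congr (Equiv.ofBijective _ hbij)).symm
  -- |T →+ B| = |T →+ A| * |T →+ C| via the product decomposition
  have hBcard : Nat.card (T →+ B) = Nat.card (T →+ A) * Nat.card (T →+ C) := by
    have h1 : (T →+ B) ≃ (T →+ A) × (T →+ C) :=
      { toFun := fun s =>
          (((AddMonoidHom.fst A C).comp (e.toAddMonoidHom.comp s)),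
           ((AddMonoidHom.snd A C).comp (e.toAddMonoidHom.comp s)))
        invFun := fun p => e.symm.toAddMonoidHom.comp (p.1.prod p.2)
        left_inv := by
          intro s; ext t
          simp [AddMonoidHom.prod]
        right_inv := by
          intro p
          obtain ⟨p1, p2⟩ := p
          refine Prod.ext ?_ ?_ <;> ext t <;> simp [AddMonoidHom.prod] }
    rw [Nat.card_congr h1, Nat.card_prod]
  -- conclude φ is surjective by counting
  have hrange : φ.range = ⊤ := by
    have hq : Nat.card (T →+ B) = Nat.card φ.range * Nat.card φ.ker := by
      rw [AddSubgroup.card_eq_card_quotient_mul_card_addSubgroup φ.ker]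
      rw [Nat.card_congr (QuotientAddGroup.quotientKerEquivRange φ).toEquiv]
    have hApos : 0 < Nat.card (T →+ A) := Nat.card_pos
    have hrc : Nat.card φ.range = Nat.card (T →+ C) := by
      have := hq.symm.trans hBcard
      rw [hkercard] at this
      exact Nat.eq_of_mul_eq_mul_right hApos (by linarith [this])
    exact AddSubgroup.eq_top_of_card_eq _ hrc
  -- lift the inclusion T ↪ C to sT : T →+ B
  have hsub : T.subtype ∈ φ.range := hrange ▸ AddSubgroup.mem_top _
  obtain ⟨sT, hsT⟩ := hsub
  have hsT' : ∀ t : T, g (sT t) = (t : C) := by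
    intro t
    exact congrArg (fun u : T →+ C => u t) hsT
  -- the torsion-free quotient Q = C / T is free, hence projective
  let Q := C ⧸ T
  have hQfg : AddGroup.FG Q := AddGroup.fg_of_surjective (QuotientAddGroup.mk'_surjective T)
  have hQfin : Module.Finite ℤ Q := Module.Finite.iff_addGroup_fg.mpr hQfg
  have hQtf : IsAddTorsionFree Q := QuotientAddGroup.instIsAddTorsionFree C
  have hQnz : NoZeroSMulDivisors ℤ Q := IsAddTorsionFree.to_noZeroSMulDivisors_int
  have hQfree : Module.Free ℤ Q := Module.free_of_finite_type_torsion_free'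
  have hQproj : Module.Projective ℤ Q := Module.Projective.of_free
  let π : C →+ Q := QuotientAddGroup.mk' T
  have hπ : Function.Surjective π := QuotientAddGroup.mk'_surjective T
  -- a section ρ of π
  obtain ⟨ρ, hρ⟩ := Module.projective_lifting_property π.toIntLinearMap
    (LinearMap.id : Q →ₗ[ℤ] Q) hπ
  -- a lift l of ρ along g
  obtain ⟨l, hl⟩ := Module.projective_lifting_property g.toIntLinearMap ρ hg
  have hρ' : ∀ q : Q, π (ρ q) = q := fun q => congrArg (fun u : Q →ₗ[ℤ] Q => u q) hρ
  have hl' : ∀ q : Q, g (l q) = ρ q := fun q => congrArg (fun u : Q →ₗ[ℤ] C => u q) hl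
  -- the "torsion part" homomorphism τ : C →+ T
  have hmemT : ∀ c : C, c - ρ (π c) ∈ T := by
    intro c
    have : π (c - ρ (π c)) = 0 := by
      rw [map_sub, hρ' (π c), sub_self]
    exact (QuotientAddGroup.eq_zero_iff _).mp this
  let τ : C →+ T :=
    { toFun := fun c => ⟨c - ρ (π c), hmemT c⟩
      map_zero' := by apply Subtype.ext; simp
      map_add' := by
        intro c c'
        apply Subtype.ext
        push_cast
        simp only [map_add]
        abel }
  -- the section
  refine ⟨(sT.comp τ) + (l.toAddMonoidHom.comp π), ?_⟩
  ext c
  have h1 : g (sT (τ c)) = c - ρ (π c) := by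
    rw [hsT' (τ c)]; rfl
  have h2 : g (l (π c)) = ρ (π c) := hl' (π c)
  simp only [AddMonoidHom.comp_apply, AddMonoidHom.add_apply, AddMonoidHom.id_apply, map_add]
  show g (sT (τ c)) + g (l (π c)) = c
  rw [h1, h2, sub_add_cancel]
end

section
/- Let m ≥ 1 and let k₁, …, k_m be nonzero integers. Let the group 𝕋 = ℂ* act on ℂ^m by t·(v₁, …, v_m) = (t^{k₁}v₁, …, t^{k_m}v_m). Let Γ = ℂ* × μ_{|k₁|} × ⋯ × μ_{|k_m|}, where μ_d ⊂ ℂ* is the group of d-th roots of unity, act on ℂ^m by (λ, ζ₁, …, ζ_m)·(v₁, …, v_m) = (λ^{ε₁}ζ₁v₁, …, λ^{ε_m}ζ_m v_m), where ε_i = k_i/|k_i| is the sign of k_i. Then the map f : ℂ^m → ℂ^m given by f(v₁, …, v_m) = (v₁^{|k₁|}, …, v_m^{|k_m|}) induces a homeomorphism of orbit spaces ℂ^m/Γ → ℂ^m/𝕋. -/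
/-- The orbit equivalence relation of a group action given by `φ : G →* Function.End X`;
`Quotient (actionSetoid φ)` is the orbit space with its quotient topology. -/
def actionSetoid {G X : Type*} [Group G] (φ : G →* Function.End X) : Setoid X where
  r v w := ∃ g : G, φ g v = w
  iseqv := by
    constructor
    · intro v
      exact ⟨1, by rw [map_one]; rfl⟩
    · rintro v w ⟨g, rfl⟩
      refine ⟨g⁻¹, ?_⟩
      have h : φ g⁻¹ * φ g = 1 := by rw [← map_mul, inv_mul_cancel, map_one]
      calc φ g⁻¹ (φ g v) = (φ g⁻¹ * φ g) v := rfl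
      _ = v := by rw [h]; rfl
    · rintro u v w ⟨g, rfl⟩ ⟨g', rfl⟩
      refine ⟨g' * g, ?_⟩
      calc φ (g' * g) u = (φ g' * φ g) u := by rw [map_mul]
      _ = φ g' (φ g u) := rfl

/-- The weighted `𝕋 = ℂ*`-action `t·(v₁,…,v_m) = (t^{k₁}v₁, …, t^{k_m}v_m)` on `ℂ^m`. -/
def weightHom (m : ℕ) (k : Fin m → ℤ) : ℂˣ →* Function.End (Fin m → ℂ) where
  toFun t := fun v i => ((t ^ k i : ℂˣ) : ℂ) * v i
  map_one' := by
    funext v i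
    show ((1 : ℂˣ) ^ k i : ℂˣ) * v i = v i
    simp
  map_mul' := by
    intro a b
    funext v i
    show (((a * b) ^ k i : ℂˣ) : ℂ) * v i = ((a ^ k i : ℂˣ) : ℂ) * (((b ^ k i : ℂˣ) : ℂ) * v i)
    simp [mul_zpow]
    ring

/-- The action of `Γ = ℂ* × μ_{|k₁|} × ⋯ × μ_{|k_m|}` on `ℂ^m` by
`(λ, ζ₁, …, ζ_m)·v = (λ^{ε₁}ζ₁v₁, …, λ^{ε_m}ζ_m v_m)`, where `ε_i` is the sign of `k_i`. -/
def gammaHom (m : ℕ) (k : Fin m → ℤ) :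
    (ℂˣ × (∀ i : Fin m, ↥(rootsOfUnity (k i).natAbs ℂ))) →* Function.End (Fin m → ℂ) where
  toFun γ := fun v i => ((γ.1 ^ (k i).sign : ℂˣ) : ℂ) * (((γ.2 i : ℂˣ) : ℂ) * v i)
  map_one' := by
    funext v i
    show (((1 : ℂˣ) ^ (k i).sign : ℂˣ) : ℂ) * ((((1 : ℂˣ)) : ℂ) * v i) = v i
    simp
  map_mul' := by
    intro a b
    funext v i
    show (((a.1 * b.1) ^ (k i).sign : ℂˣ) : ℂ) * (((a.2 i * b.2 i : ℂˣ) : ℂ) * v i)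
      = ((a.1 ^ (k i).sign : ℂˣ) : ℂ) * (((a.2 i : ℂˣ) : ℂ) *
          (((b.1 ^ (k i).sign : ℂˣ) : ℂ) * (((b.2 i : ℂˣ) : ℂ) * v i)))
    simp [mul_zpow]
    ring


private lemma isOpenMap_pow_complex {n : ℕ} (hn : n ≠ 0) : IsOpenMap (fun z : ℂ => z ^ n) := by
  have hg : AnalyticOnNhd ℂ (fun z : ℂ => z ^ n) Set.univ :=
    fun z _ => (analyticAt_id).pow n
  rcases hg.is_constant_or_isOpen isPreconnected_univ with ⟨w, hw⟩ | h
  · have h0 := hw 0 trivial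
    have h1 := hw 1 trivial
    rw [zero_pow hn] at h0
    rw [one_pow] at h1
    rw [← h0] at h1
    norm_num at h1
  · exact fun s hs => h s (Set.subset_univ s) hs

/-- **Lemma 5.5**: the map `f(v₁,…,v_m) = (v₁^{|k₁|}, …, v_m^{|k_m|})` induces a
homeomorphism `ℂ^m/Γ ≃ ℂ^m/𝕋` between the orbit spaces. -/
theorem power_map_induces_homeomorph_of_orbit_spaces
    (m : ℕ) (hm : 1 ≤ m) (k : Fin m → ℤ) (hk : ∀ i, k i ≠ 0) :
    ∃ F : Quotient (actionSetoid (gammaHom m k)) ≃ₜ Quotient (actionSetoid (weightHom m k)),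
      ∀ v : Fin m → ℂ,
        F (Quotient.mk (actionSetoid (gammaHom m k)) v) =
          Quotient.mk (actionSetoid (weightHom m k)) (fun i => v i ^ (k i).natAbs) := by
  classical
  set n : Fin m → ℕ := fun i => (k i).natAbs with hndef
  have hn0 : ∀ i, n i ≠ 0 := fun i => Int.natAbs_ne_zero.mpr (hk i)
  set f : (Fin m → ℂ) → (Fin m → ℂ) := fun v i => v i ^ n i with hfdef
  set SΓ := actionSetoid (gammaHom m k) with hSΓ
  set ST := actionSetoid (weightHom m k) with hST
  -- key power identity
  have hsp : ∀ (t : ℂˣ) (i : Fin m), ((t ^ (k i).sign : ℂˣ) : ℂ) ^ n i = ((t ^ k i : ℂˣ) : ℂ) := by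
    intro t i
    rw [← Units.val_pow_eq_pow_val, ← zpow_natCast, ← zpow_mul, Int.sign_mul_natAbs]
  -- f sends Γ-related points to 𝕋-related points
  have fwd : ∀ v w, SΓ.r v w → ST.r (f v) (f w) := by
    rintro v w ⟨⟨t, ζ⟩, rfl⟩
    refine ⟨t, ?_⟩
    funext i
    show ((t ^ k i : ℂˣ) : ℂ) * v i ^ n i
      = (((t ^ (k i).sign : ℂˣ) : ℂ) * (((ζ i : ℂˣ) : ℂ) * v i)) ^ n i
    have hζ : ((ζ i : ℂˣ) : ℂ) ^ n i = 1 := by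
      have h1 : (ζ i : ℂˣ) ^ n i = 1 := (mem_rootsOfUnity _ _).mp (ζ i).2
      calc ((ζ i : ℂˣ) : ℂ) ^ n i = (((ζ i : ℂˣ) ^ n i : ℂˣ) : ℂ) := by
            rw [Units.val_pow_eq_pow_val]
      _ = 1 := by rw [h1]; rfl
    rw [mul_pow, mul_pow, hζ, one_mul, hsp]
  -- conversely, if the images are 𝕋-related then the points are Γ-related
  have bwd : ∀ v w, ST.r (f v) (f w) → SΓ.r v w := by
    rintro v w ⟨t, ht⟩
    have hti : ∀ i, ((t ^ k i : ℂˣ) : ℂ) * v i ^ n i = w i ^ n i := fun i => congrFun ht i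
    have key : ∀ i, ∃ ζ : ℂˣ, ζ ^ n i = 1 ∧
        ((t ^ (k i).sign : ℂˣ) : ℂ) * ((ζ : ℂ) * v i) = w i := by
      intro i
      rcases eq_or_ne (v i) 0 with hv | hv
      · refine ⟨1, one_pow _, ?_⟩
        have hw : w i = 0 := by
          have h := hti i
          rw [hv, zero_pow (hn0 i), mul_zero] at h
          exact pow_eq_zero_iff (hn0 i) |>.mp h.symm
        simp [hv, hw]
      · set c : ℂ := ((t ^ (k i).sign : ℂˣ) : ℂ) * v i with hc
        have hc0 : c ≠ 0 := mul_ne_zero (Units.ne_zero _) hv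
        have hcn : c ^ n i = w i ^ n i := by
          rw [hc, mul_pow, hsp, hti i]
        have hw0 : w i ≠ 0 := by
          intro h
          rw [h, zero_pow (hn0 i)] at hcn
          exact hc0 (pow_eq_zero_iff (hn0 i) |>.mp hcn)
        refine ⟨Units.mk0 (w i / c) (div_ne_zero hw0 hc0), ?_, ?_⟩
        · ext
          rw [Units.val_pow_eq_pow_val, Units.val_mk0, div_pow, hcn, div_self (pow_ne_zero _ hw0)]
          rfl
        · rw [Units.val_mk0]
          have heq : ((t ^ (k i).sign : ℂˣ) : ℂ) * (w i / c * v i) = (c * w i) / c := by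
            rw [hc]; ring
          rw [heq, mul_div_cancel_left₀ _ hc0]
    choose ζ hζ1 hζ2 using key
    exact ⟨(t, fun i => ⟨ζ i, (mem_rootsOfUnity _ _).mpr (hζ1 i)⟩), funext fun i => hζ2 i⟩
  -- the induced map on orbit spaces
  let F0 : Quotient SΓ → Quotient ST :=
    Quotient.lift (fun v => Quotient.mk ST (f v)) (fun v w h => Quotient.sound (fwd v w h))
  have hinj : Function.Injective F0 := by
    intro a b
    induction a using Quotient.ind with | _ v =>
    induction b using Quotient.ind with | _ w =>
    intro h
    exact Quotient.sound (bwd v w (Quotient.exact h))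
  have hsurj : Function.Surjective F0 := by
    intro b
    induction b using Quotient.ind with | _ w =>
    have hroot : ∀ i, ∃ z : ℂ, z ^ n i = w i := fun i =>
      IsAlgClosed.exists_pow_nat_eq (w i) (Nat.pos_of_ne_zero (hn0 i))
    choose v hv using hroot
    refine ⟨Quotient.mk SΓ v, ?_⟩
    show Quotient.mk ST (f v) = Quotient.mk ST w
    congr 1
    funext i
    exact hv i
  have hcont : Continuous F0 := by
    apply continuous_quot_lift
    exact (continuous_quot_mk).comp (continuous_pi fun i => (continuous_apply i).pow (n i))
  -- f is an open map
  have hfopen : IsOpenMap f := by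
    have hfe : f = Pi.map (fun i (z : ℂ) => z ^ n i) := rfl
    rw [hfe]
    exact IsOpenMap.piMap (fun i => isOpenMap_pow_complex (hn0 i))
      (Filter.Eventually.of_forall fun i w =>
        IsAlgClosed.exists_pow_nat_eq w (Nat.pos_of_ne_zero (hn0 i)))
  -- each weightHom t is an open map
  have hWinv : ∀ (a b : ℂˣ) (v : Fin m → ℂ),
      weightHom m k a (weightHom m k b v) = weightHom m k (a * b) v := by
    intro a b v
    rw [map_mul]
    rfl
  have hWopen : ∀ t : ℂˣ, IsOpenMap (weightHom m k t) := by
    intro t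
    apply IsOpenMap.of_inverse (f' := weightHom m k t⁻¹)
    · exact continuous_pi fun i => continuous_const.mul (continuous_apply i)
    · intro v
      rw [hWinv, mul_inv_cancel, map_one]
      rfl
    · intro v
      rw [hWinv, inv_mul_cancel, map_one]
      rfl
  have hFopen : IsOpenMap F0 := by
    intro U hU
    have hS : IsOpen (Quotient.mk SΓ ⁻¹' U) := (continuous_quot_mk).isOpen_preimage U hU
    have heq : Quotient.mk ST ⁻¹' (F0 '' U)
        = ⋃ t : ℂˣ, weightHom m k t '' (f '' (Quotient.mk SΓ ⁻¹' U)) := by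
      ext x
      constructor
      · rintro hx
        obtain ⟨a, haU, ha⟩ := hx
        obtain ⟨v, rfl⟩ := Quotient.exists_rep a
        obtain ⟨t, ht⟩ := Quotient.exact ha
        exact Set.mem_iUnion.mpr ⟨t, ⟨f v, ⟨v, haU, rfl⟩, ht⟩⟩
      · intro hx
        obtain ⟨t, ⟨_, ⟨v, hvU, rfl⟩, ht⟩⟩ := Set.mem_iUnion.mp hx
        exact ⟨Quotient.mk SΓ v, hvU, Quotient.sound ⟨t, ht⟩⟩
    have : IsOpen (Quotient.mk ST ⁻¹' (F0 '' U)) := by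
      rw [heq]
      exact isOpen_iUnion fun t => hWopen t _ (hfopen _ hS)
    exact this
  refine ⟨Equiv.toHomeomorphOfContinuousOpen (Equiv.ofBijective F0 ⟨hinj, hsurj⟩)
    hcont hFopen, fun v => rfl⟩
end

section
/- Let n ≥ 2 and let d be a positive divisor of n. Let B ⊆ SL_n(ℂ) be the set of determinant-1 matrices that are block-diagonal with d diagonal blocks each of size n/d, and let M ∈ SL_n(ℂ) be a scalar multiple λ·P of the block cyclic permutation matrix P (which cyclically permutes the d blocks of n/d coordinates), where λ ∈ ℂ* is chosen so that det(λ·P) = 1. Then the subgroup of SL_n(ℂ) generated by B and M acts irreducibly on ℂⁿ: the only ℂ-linear subspaces of ℂⁿ invariant under every element of this subgroup are {0} and ℂⁿ. -/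
open Matrix
open Fin.NatCast

/-- The subgroup of `SL_n(ℂ)` generated by the block-diagonal matrices (with `d` blocks of
size `n/d`, coordinates indexed by `Fin d × Fin (n/d)`) together with a unimodular scalar
multiple `M = λ·P` of the block cyclic permutation matrix `P` acts irreducibly on `ℂⁿ`. -/
theorem block_diagonal_and_cycle_generate_irreducible
    (n d : ℕ) (hn : 2 ≤ n) (hd : 0 < d) (hdvd : d ∣ n)
    (lam : ℂ) (M : Matrix.SpecialLinearGroup (Fin d × Fin (n / d)) ℂ)
    (hM : haveI : NeZero d := ⟨hd.ne'⟩
      (M : Matrix (Fin d × Fin (n / d)) (Fin d × Fin (n / d)) ℂ) =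
        fun x y => if x.1 = y.1 + 1 ∧ x.2 = y.2 then lam else 0) :
    ∀ W : Submodule ℂ (Fin d × Fin (n / d) → ℂ),
      (∀ S ∈ Subgroup.closure
          ({A : Matrix.SpecialLinearGroup (Fin d × Fin (n / d)) ℂ |
            ∀ x y : Fin d × Fin (n / d), x.1 ≠ y.1 →
              (A : Matrix (Fin d × Fin (n / d)) (Fin d × Fin (n / d)) ℂ) x y = 0} ∪ {M}),
        ∀ w ∈ W, Matrix.mulVec (S : Matrix (Fin d × Fin (n / d)) (Fin d × Fin (n / d)) ℂ) w ∈ W) →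
      W = ⊥ ∨ W = ⊤ := by
  intro W hW
  haveI : NeZero d := ⟨hd.ne'⟩
  have hm : 0 < n / d := Nat.div_pos (Nat.le_of_dvd (by omega) hdvd) hd
  haveI : NeZero (n / d) := ⟨hm.ne'⟩
  by_cases hbot : W = ⊥
  · exact Or.inl hbot
  right
  have hcard : 2 ≤ Fintype.card (Fin d × Fin (n / d)) := by
    have : d * (n / d) = n := Nat.mul_div_cancel' hdvd
    simp only [Fintype.card_prod, Fintype.card_fin]
    omega
  -- λ ≠ 0
  have hlam : lam ≠ 0 := by
    intro h0
    have hz : (M : Matrix (Fin d × Fin (n / d)) (Fin d × Fin (n / d)) ℂ) = 0 := by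
      funext x y
      rw [hM]
      simp [h0]
    have hdet := M.property
    rw [hz, Matrix.det_zero] at hdet
    exact zero_ne_one hdet
  -- membership of generators
  have hBmem : ∀ A : Matrix.SpecialLinearGroup (Fin d × Fin (n / d)) ℂ,
      (∀ x y : Fin d × Fin (n / d), x.1 ≠ y.1 →
        (A : Matrix (Fin d × Fin (n / d)) (Fin d × Fin (n / d)) ℂ) x y = 0) →
      A ∈ Subgroup.closure
        ({A : Matrix.SpecialLinearGroup (Fin d × Fin (n / d)) ℂ |
            ∀ x y : Fin d × Fin (n / d), x.1 ≠ y.1 →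
              (A : Matrix (Fin d × Fin (n / d)) (Fin d × Fin (n / d)) ℂ) x y = 0} ∪ {M}) :=
    fun A hA => Subgroup.subset_closure (Or.inl hA)
  have hMmem : M ∈ Subgroup.closure
        ({A : Matrix.SpecialLinearGroup (Fin d × Fin (n / d)) ℂ |
            ∀ x y : Fin d × Fin (n / d), x.1 ≠ y.1 →
              (A : Matrix (Fin d × Fin (n / d)) (Fin d × Fin (n / d)) ℂ) x y = 0} ∪ {M}) :=
    Subgroup.subset_closure (Or.inr rfl)
  -- coordinate extraction via diagonal matrices
  have extract : ∀ w ∈ W, ∀ x : Fin d × Fin (n / d), Pi.single x (w x) ∈ W := by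
    intro w hw x
    obtain ⟨x', hx'⟩ := Fintype.exists_ne_of_one_lt_card (by omega) x
    have hDmem : ∀ t : ℂ, t ≠ 0 →
        (fun z => (if z = x then t else if z = x' then t⁻¹ else 1) * w z) ∈ W := by
      intro t ht
      set f : Fin d × Fin (n / d) → ℂ :=
        fun z => if z = x then t else if z = x' then t⁻¹ else 1 with hf
      have hdet : (Matrix.diagonal f).det = 1 := by
        rw [Matrix.det_diagonal,
          ← Finset.mul_prod_erase Finset.univ f (Finset.mem_univ x),
          ← Finset.mul_prod_erase _ f
            (Finset.mem_erase.mpr ⟨hx', Finset.mem_univ x'⟩),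
          Finset.prod_eq_one (fun z hz => ?_)]
        · have h1 : f x = t := by simp [hf]
          have h2 : f x' = t⁻¹ := by simp [hf, hx']
          rw [h1, h2, mul_one, mul_inv_cancel₀ ht]
        · obtain ⟨hz1, hz2, -⟩ := Finset.mem_erase.mp hz |>.imp id Finset.mem_erase.mp
          simp [hf, hz1, hz2]
      have hmem := hW ⟨Matrix.diagonal f, hdet⟩
        (hBmem _ (fun a b hab => Matrix.diagonal_apply_ne f
          (fun h => hab (congrArg Prod.fst h)))) w hw
      have heq : Matrix.diagonal f *ᵥ w = fun z => f z * w z :=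
        funext fun z => Matrix.mulVec_diagonal f w z
      rw [heq] at hmem
      exact hmem
    have h2 := W.sub_mem (hDmem 2 two_ne_zero) hw
    have hh := W.sub_mem (hDmem (1/2) (by norm_num)) hw
    have hc := W.add_mem h2 (W.smul_mem ((1:ℂ)/2) hh)
    have hfinal := W.smul_mem ((4:ℂ)/3) hc
    have heq : ((4:ℂ)/3) • (((fun z => (if z = x then (2:ℂ) else if z = x' then 2⁻¹ else 1) * w z) - w)
        + ((1:ℂ)/2) • ((fun z => (if z = x then (1/2:ℂ) else if z = x' then (1/2:ℂ)⁻¹ else 1) * w z) - w))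
        = Pi.single x (w x) := by
      funext z
      by_cases hz : z = x
      · subst hz
        simp [Pi.single_apply]
        ring
      · by_cases hz' : z = x'
        · subst hz'
          simp [Pi.single_apply, hz, hx'.symm]
          ring
        · simp [Pi.single_apply, hz, hz']
    rw [heq] at hfinal
    exact hfinal
  -- block shift
  have shift : ∀ (j : Fin d) (k : Fin (n / d)) (c : ℂ), Pi.single (j, k) c ∈ W →
      Pi.single ((j + 1 : Fin d), k) (lam * c) ∈ W := by
    intro j k c hc
    have hmem := hW M hMmem _ hc
    have heq : (M : Matrix (Fin d × Fin (n / d)) (Fin d × Fin (n / d)) ℂ) *ᵥ Pi.single (j, k) c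
        = Pi.single ((j + 1 : Fin d), k) (lam * c) := by
      rw [Matrix.mulVec_single]
      funext z
      simp only [Pi.smul_apply, Matrix.col_apply]
      rw [hM]
      rcases z with ⟨a, b⟩
      by_cases h1 : a = j + 1 <;> by_cases h2 : b = k <;>
        simp [Pi.single_apply, Prod.ext_iff, h1, h2, Matrix.col_apply]
    rw [heq] at hmem
    exact hmem
  have shiftn : ∀ (s : ℕ) (j : Fin d) (k : Fin (n / d)) (c : ℂ), Pi.single (j, k) c ∈ W →
      Pi.single ((j + (s : Fin d)), k) (lam ^ s * c) ∈ W := by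
    intro s
    induction s with
    | zero => intro j k c hc; simpa using hc
    | succ s ih =>
      intro j k c hc
      have h1 := shift (j + (s : Fin d)) k _ (ih j k c hc)
      have e1 : ((s + 1 : ℕ) : Fin d) = (s : Fin d) + 1 := by push_cast; ring
      rw [e1, ← add_assoc]
      have e2 : lam ^ (s + 1) * c = lam * (lam ^ s * c) := by ring
      rw [e2]
      exact h1
  -- within-block move
  have trans : ∀ (j : Fin d) (k k' : Fin (n / d)), k ≠ k' → ∀ c : ℂ,
      Pi.single (j, k) c ∈ W → Pi.single (j, k') c ∈ W := by
    intro j k k' hkk' c hc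
    have hne : ((j, k') : Fin d × Fin (n / d)) ≠ (j, k) := by
      simp [Prod.ext_iff, hkk'.symm]
    have hdet : (Matrix.transvection ((j, k') : Fin d × Fin (n / d)) (j, k) (1 : ℂ)).det = 1 :=
      Matrix.det_transvection_of_ne _ _ hne 1
    have hblk : ∀ x y : Fin d × Fin (n / d), x.1 ≠ y.1 →
        Matrix.transvection ((j, k') : Fin d × Fin (n / d)) (j, k) (1 : ℂ) x y = 0 := by
      intro x y hxy
      rw [Matrix.transvection]
      have h1 : (1 : Matrix (Fin d × Fin (n / d)) (Fin d × Fin (n / d)) ℂ) x y = 0 :=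
        Matrix.one_apply_ne (fun h => hxy (congrArg Prod.fst h))
      have h2 : Matrix.single ((j, k') : Fin d × Fin (n / d)) (j, k) (1 : ℂ) x y = 0 := by
        rw [Matrix.single]
        simp only [Matrix.of_apply]
        rw [if_neg]
        rintro ⟨rfl, rfl⟩
        exact hxy rfl
      simp [h1, h2]
    have hmem := hW ⟨_, hdet⟩ (hBmem _ hblk) _ hc
    have heq : Matrix.transvection ((j, k') : Fin d × Fin (n / d)) (j, k) (1 : ℂ) *ᵥ Pi.single (j, k) c
        = Pi.single (j, k) c + Pi.single (j, k') c := by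
      rw [Matrix.transvection, Matrix.add_mulVec, Matrix.one_mulVec, Matrix.mulVec_single]
      funext z
      simp only [Pi.add_apply, Matrix.single, Matrix.of_apply, Pi.single_apply]
      congr 1
      by_cases hz : z = (j, k')
      · subst hz
        simp
      · simp [hz, Ne.symm hz]
    rw [heq] at hmem
    have := W.sub_mem hmem hc
    simpa using this
  -- get a nonzero single
  obtain ⟨w, hwW, hw0⟩ := (Submodule.ne_bot_iff W).mp hbot
  obtain ⟨x0, hx0⟩ : ∃ x, w x ≠ 0 := by
    by_contra h
    push_neg at h
    exact hw0 (funext h)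
  have reach : ∀ y : Fin d × Fin (n / d), ∃ c : ℂ, c ≠ 0 ∧ Pi.single y c ∈ W := by
    rintro ⟨j, k⟩
    have h0 : Pi.single x0 (w x0) ∈ W := extract w hwW x0
    obtain ⟨j0, k0⟩ := x0
    have hshift := shiftn ((j - j0 : Fin d)).val j0 k0 _ h0
    have hj : j0 + (((j - j0 : Fin d)).val : Fin d) = j := by
      rw [Fin.cast_val_eq_self]
      rw [add_comm]
      exact sub_add_cancel j j0
    rw [hj] at hshift
    set c := lam ^ ((j - j0 : Fin d)).val * w (j0, k0) with hc
    have hcne : c ≠ 0 := mul_ne_zero (pow_ne_zero _ hlam) hx0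
    by_cases hk : k0 = k
    · subst hk
      exact ⟨c, hcne, hshift⟩
    · exact ⟨c, hcne, trans j k0 k hk c hshift⟩
  rw [Submodule.eq_top_iff']
  intro v
  have hv : v = ∑ y : Fin d × Fin (n / d), (Pi.single y (v y) : Fin d × Fin (n / d) → ℂ) :=
    (Finset.univ_sum_single v).symm
  rw [hv]
  refine Submodule.sum_mem _ (fun y _ => ?_)
  obtain ⟨c, hc0, hcW⟩ := reach y
  have hsm := W.smul_mem (v y * c⁻¹) hcW
  have heq2 : (v y * c⁻¹) • (Pi.single y c : Fin d × Fin (n / d) → ℂ)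
      = Pi.single y (v y) := by
    rw [← Pi.single_smul]
    rw [smul_eq_mul, mul_assoc, inv_mul_cancel₀ hc0, mul_one]
  rw [heq2] at hsm
  exact hsm
end

section
/- Let G be a group and let Z ≤ G be a central subgroup that is isomorphic, as an abstract group, to (ℂ*)^k × A for some k ≥ 0 and some finite abelian group A. If g ∈ G satisfies gⁿ ∈ Z for some integer n ≥ 1, then there exist s ∈ Z and an element h ∈ G of finite order such that g = h·s. -/
/-- If `Z ≤ G` is central and abstractly isomorphic to `(ℂ*)^k × A` with `A` finite abelian,
then any `g ∈ G` with `gⁿ ∈ Z` (`n ≥ 1`) is a product of a finite-order element and an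
element of `Z`. -/
theorem eq_finOrder_mul_central_of_pow_mem_center
    (G : Type) [Group G] (Z : Subgroup G) (hZ : Z ≤ Subgroup.center G)
    (k : ℕ) (A : Type) [CommGroup A] [Finite A]
    (hiso : Nonempty (↥Z ≃* ((Fin k → ℂˣ) × A)))
    (g : G) (n : ℕ) (hn : 1 ≤ n) (hg : g ^ n ∈ Z) :
    ∃ s ∈ Z, ∃ h : G, IsOfFinOrder h ∧ g = h * s := by
  obtain ⟨φ⟩ := hiso
  set t : Fin k → ℂˣ := (φ ⟨g ^ n, hg⟩).1 with ht
  set a : A := (φ ⟨g ^ n, hg⟩).2 with ha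
  -- choose n-th roots of each coordinate of t
  have hroot : ∀ i : Fin k, ∃ u : ℂˣ, u ^ n = t i := by
    intro i
    obtain ⟨z, hz⟩ := IsAlgClosed.exists_pow_nat_eq ((t i : ℂ)) (Nat.lt_of_lt_of_le Nat.zero_lt_one hn)
    have hz0 : z ≠ 0 := by
      intro h
      apply (t i).ne_zero
      rw [← hz, h, zero_pow (by omega)]
    refine ⟨Units.mk0 z hz0, ?_⟩
    ext
    simpa using hz
  choose u hu using hroot
  set s : ↥Z := φ.symm (u, 1) with hs
  refine ⟨(s : G), s.2, g * (s : G)⁻¹, ?_, by group⟩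
  -- s is central, so it commutes with g
  have hcomm : Commute g ((s : G)⁻¹) :=
    Commute.inv_right (Subgroup.mem_center_iff.mp (hZ s.2) g)
  have hpow : (g * (s : G)⁻¹) ^ n = g ^ n * ((s : G)⁻¹) ^ n := hcomm.mul_pow n
  have hsn : (s ^ n : ↥Z) = φ.symm (u ^ n, 1) := by
    rw [hs, ← map_pow]
    congr 1
    simp [Prod.pow_def]
  have hun : (u ^ n : Fin k → ℂˣ) = t := by
    funext i
    exact hu i
  have hgen : (⟨g ^ n, hg⟩ : ↥Z) = φ.symm (t, a) := by
    rw [ht, ha]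
    simp
  have key : (g * (s : G)⁻¹) ^ n = ((φ.symm (1, a) : ↥Z) : G) := by
    rw [hpow]
    have : ((s : G)⁻¹) ^ n = ((s⁻¹ ^ n : ↥Z) : G) := by push_cast; ring_nf
    rw [this]
    have : g ^ n = ((⟨g ^ n, hg⟩ : ↥Z) : G) := rfl
    rw [this, ← Subgroup.coe_mul]
    congr 1
    rw [inv_pow, hsn, hgen, ← map_inv, ← map_mul]
    congr 1
    rw [hun]
    simp [Prod.ext_iff]
  -- (1, a) has finite order
  have hfin : IsOfFinOrder ((1, a) : (Fin k → ℂˣ) × A) := by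
    obtain ⟨m, hm, hma⟩ := (isOfFinOrder_of_finite a).exists_pow_eq_one
    exact isOfFinOrder_iff_pow_eq_one.mpr ⟨m, hm, by simp [Prod.pow_def, hma]⟩
  have hfin2 : IsOfFinOrder ((g * (s : G)⁻¹) ^ n) := by
    rw [key]
    exact Z.subtype.isOfFinOrder (φ.symm.toMonoidHom.isOfFinOrder hfin)
  exact hfin2.of_pow (by omega)
end
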